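/- Let ψ be a potential, u in its domain, and φ(u) ≥ 0 with u + φ(u) in the domain of ψ. Set x = ψ(u), m = (ψ(u+φ(u)) - ψ(u))/φ(u) (taking m = ψ'(u) if φ(u) = 0), and let f be an antiderivative of ψ⁻¹. Then for every y with 0 < y ≤ ψ(u + φ(u)), Breg_f(y‖x) ≥ (x-y)²/(2m). -/

import Mathlib

open Filter

/-- A potential function `ψ : (-∞, a) → (0, ∞)`: convex, strictly increasing,
continuously differentiable, tending to `0` at `-∞` and to `+∞` at `a`. -/
structure IsPotential (a : EReal) (ψ : ℝ → ℝ) : Prop where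
  convexOn : ConvexOn ℝ {x : ℝ | (x : EReal) < a} ψ
  strictMonoOn : StrictMonoOn ψ {x : ℝ | (x : EReal) < a}
  pos : ∀ x : ℝ, (x : EReal) < a → 0 < ψ x
  diff : ∀ x : ℝ, (x : EReal) < a → DifferentiableAt ℝ ψ x
  contDeriv : ContinuousOn (deriv ψ) {x : ℝ | (x : EReal) < a}
  tendsto_bot : Tendsto ψ atBot (nhds 0)
  tendsto_top : Tendsto ψ
    (comap (fun x : ℝ => (x : EReal)) (nhdsWithin a (Set.Iio a))) atTop

/-- Local-norm lower bound for the Bregman divergence of `f_ψ`. -/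
theorem bregman_local_norm_lower_bound (a : EReal) (ψ : ℝ → ℝ)
    (hψ : IsPotential a ψ)
    (f : ℝ → ℝ) (hf : ∀ w : ℝ, (w : EReal) < a → HasDerivAt f w (ψ w))
    (u φu : ℝ) (hu : (u : EReal) < a) (hφ0 : 0 ≤ φu)
    (huφ : ((u + φu : ℝ) : EReal) < a)
    (m : ℝ) (hm : m = if φu = 0 then deriv ψ u else (ψ (u + φu) - ψ u) / φu) :
    ∀ y : ℝ, 0 < y → y ≤ ψ (u + φu) →
      f y - f (ψ u) - u * (y - ψ u) ≥ (ψ u - y) ^ 2 / (2 * m) := by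
  intro y hy0 hy
  set S : Set ℝ := {x : ℝ | (x : EReal) < a} with hSdef
  have hmemS : ∀ w : ℝ, w ≤ u + φu → w ∈ S := fun w hw =>
    lt_of_le_of_lt (EReal.coe_le_coe_iff.2 hw) huφ
  have huS : u ∈ S := hmemS u (by linarith)
  -- the derivative of ψ is positive on S
  have hderiv_pos : ∀ w ∈ S, 0 < deriv ψ w := by
    intro w hw
    have hw1 : (w - 1 : ℝ) ∈ S :=
      lt_trans (EReal.coe_lt_coe_iff.2 (by linarith)) hw
    have hs := hψ.convexOn.slope_le_deriv hw1 hw (by linarith) (hψ.diff w hw)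
    rw [slope_def_field] at hs
    have h1 : (w - (w - 1) : ℝ) = 1 := by ring
    rw [h1, div_one] at hs
    have h2 : ψ (w - 1) < ψ w := hψ.strictMonoOn hw1 hw (by linarith)
    linarith
  -- m is positive
  have hm_pos : 0 < m := by
    rcases eq_or_lt_of_le hφ0 with h0 | h0
    · rw [hm, if_pos h0.symm]
      exact hderiv_pos u huS
    · rw [hm, if_neg (ne_of_gt h0)]
      have := hψ.strictMonoOn huS (hmemS _ le_rfl) (by linarith)
      exact div_pos (by linarith) h0
  -- key inequality for w ≥ u
  have key1 : ∀ w ∈ Set.Icc u (u + φu), ψ w - ψ u ≤ m * (w - u) := by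
    intro w hw
    rcases eq_or_lt_of_le hw.1 with rfl | hww
    · simp
    have h0 : 0 < φu := by linarith [hw.2]
    rw [hm, if_neg (ne_of_gt h0)]
    have hs := hψ.convexOn.secant_mono huS (hmemS w hw.2) (hmemS _ le_rfl)
      (ne_of_gt hww) (ne_of_gt (by linarith : u < u + φu)) hw.2
    have h1 : (u + φu - u : ℝ) = φu := by ring
    rw [h1] at hs
    have h2 : (ψ w - ψ u) / (w - u) ≤ (ψ (u + φu) - ψ u) / φu := hs
    calc ψ w - ψ u = (ψ w - ψ u) / (w - u) * (w - u) :=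
          (div_mul_cancel₀ _ (by linarith : w - u ≠ 0)).symm
      _ ≤ (ψ (u + φu) - ψ u) / φu * (w - u) := by
          apply mul_le_mul_of_nonneg_right h2 (by linarith)
  -- key inequality for w ≤ u
  have key2 : ∀ w ∈ S, w < u → ψ u - ψ w ≤ m * (u - w) := by
    intro w hw hwu
    have hsl : (ψ u - ψ w) / (u - w) ≤ m := by
      rcases eq_or_lt_of_le hφ0 with h0 | h0
      · rw [hm, if_pos h0.symm]
        have hs := hψ.convexOn.slope_le_deriv hw huS hwu (hψ.diff u huS)
        rw [slope_def_field] at hs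
        exact hs
      · rw [hm, if_neg (ne_of_gt h0)]
        have hs := hψ.convexOn.slope_mono_adjacent hw (hmemS _ le_rfl) hwu
          (by linarith : u < u + φu)
        rwa [show (u + φu - u : ℝ) = φu by ring] at hs
    calc ψ u - ψ w = (ψ u - ψ w) / (u - w) * (u - w) :=
          (div_mul_cancel₀ _ (by linarith : u - w ≠ 0)).symm
      _ ≤ m * (u - w) := mul_le_mul_of_nonneg_right hsl (by linarith)
  -- choose w0 with ψ w0 < y and w0 ≤ u
  obtain ⟨w0, hw0u, hw0y⟩ : ∃ w0, w0 ≤ u ∧ ψ w0 < y := by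
    have h1 : ∀ᶠ w in atBot, ψ w < y := hψ.tendsto_bot.eventually (eventually_lt_nhds hy0)
    have h2 : ∀ᶠ w in atBot, w ≤ u := eventually_le_atBot u
    obtain ⟨w0, hw0⟩ := (h2.and h1).exists
    exact ⟨w0, hw0.1, hw0.2⟩
  have hw0S : w0 ∈ S := hmemS w0 (by linarith)
  -- find v with ψ v = y by the intermediate value theorem
  have hψcont : ContinuousOn ψ (Set.Icc w0 (u + φu)) := fun w hw =>
    ((hψ.diff w (hmemS w hw.2)).continuousAt).continuousWithinAt
  obtain ⟨v, hvK, hψv⟩ :=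
    intermediate_value_Icc (by linarith : w0 ≤ u + φu) hψcont ⟨le_of_lt hw0y, hy⟩
  -- the auxiliary function G
  set G : ℝ → ℝ := fun w =>
    f (ψ w) - f (ψ u) - u * (ψ w - ψ u) - (ψ u - ψ w) ^ 2 / (2 * m) with hGdef
  have hG : ∀ w ∈ S, HasDerivAt G (deriv ψ w * ((w - u) + (ψ u - ψ w) / m)) w := by
    intro w hw
    have hψ' : HasDerivAt ψ (deriv ψ w) w := (hψ.diff w hw).hasDerivAt
    have hA : HasDerivAt (fun w => f (ψ w)) (w * deriv ψ w) w := (hf w hw).comp w hψ'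
    have hB : HasDerivAt (fun w => u * (ψ w - ψ u)) (u * deriv ψ w) w :=
      (hψ'.sub_const _).const_mul u
    have hc0 : HasDerivAt (fun w => ψ u - ψ w) (-(deriv ψ w)) w := hψ'.const_sub _
    have hC : HasDerivAt (fun w => (ψ u - ψ w) ^ 2 / (2 * m))
        ((2 * (ψ u - ψ w) ^ 1 * (-(deriv ψ w))) / (2 * m)) w := (hc0.pow 2).div_const _
    have := ((hA.sub_const (f (ψ u))).sub hB).sub hC
    refine this.congr_deriv ?_
    have hm' : m ≠ 0 := ne_of_gt hm_pos
    field_simp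
    ring
  have hGu : G u = 0 := by simp [hGdef]
  have hGv : 0 ≤ G v := by
    rcases le_total v u with hvu | hvu
    · -- G is antitone on [w0, u]
      have hanti : AntitoneOn G (Set.Icc w0 u) := by
        apply antitoneOn_of_deriv_nonpos (convex_Icc _ _)
        · exact fun w hw => ((hG w (hmemS w (by linarith [hw.2]))).continuousAt).continuousWithinAt
        · intro w hw
          rw [interior_Icc] at hw
          exact ((hG w (hmemS w (by linarith [hw.2]))).differentiableAt).differentiableWithinAt
        · intro w hw
          rw [interior_Icc] at hw
          have hwS : w ∈ S := hmemS w (by linarith [hw.2])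
          rw [(hG w hwS).deriv]
          have h2 := key2 w hwS hw.2
          have h3 : (ψ u - ψ w) / m ≤ u - w := (div_le_iff₀ hm_pos).2 (by linarith)
          have h4 : (w - u) + (ψ u - ψ w) / m ≤ 0 := by linarith
          exact mul_nonpos_of_nonneg_of_nonpos (le_of_lt (hderiv_pos w hwS)) h4
      have := hanti ⟨hvK.1, hvu⟩ ⟨hw0u, le_rfl⟩ hvu
      linarith [hGu ▸ this]
    · -- G is monotone on [u, u + φu]
      have hmono : MonotoneOn G (Set.Icc u (u + φu)) := by
        apply monotoneOn_of_deriv_nonneg (convex_Icc _ _)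
        · exact fun w hw => ((hG w (hmemS w hw.2)).continuousAt).continuousWithinAt
        · intro w hw
          rw [interior_Icc] at hw
          exact ((hG w (hmemS w (le_of_lt hw.2))).differentiableAt).differentiableWithinAt
        · intro w hw
          rw [interior_Icc] at hw
          have hwS : w ∈ S := hmemS w (le_of_lt hw.2)
          rw [(hG w hwS).deriv]
          have h2 := key1 w ⟨le_of_lt hw.1, le_of_lt hw.2⟩
          have h3 : -((ψ u - ψ w) / m) ≤ w - u := by
            rw [← neg_div, neg_sub]
            exact (div_le_iff₀ hm_pos).2 (by linarith)
          have h4 : 0 ≤ (w - u) + (ψ u - ψ w) / m := by linarith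
          exact mul_nonneg (le_of_lt (hderiv_pos w hwS)) h4
      have := hmono ⟨le_rfl, by linarith⟩ ⟨hvu, hvK.2⟩ hvu
      linarith [hGu ▸ this]
  rw [← hψv]
  have : G v = f (ψ v) - f (ψ u) - u * (ψ v - ψ u) - (ψ u - ψ v) ^ 2 / (2 * m) := rfl
  linarith [this ▸ hGv]
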